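/- Fix x > 0 and, on the state space S := {(n₀, n₁, …, n_J) ∈ ℕ₀^{J+1} : n₀+⋯+n_J = N}, define the product-form weights w(n) := (η₀/x)^{n₀} · ∏_{j=1}^{J} ∏_{i=1}^{n_j} (η_j/ν_j(i)) and the normalisation constant C_x(N) := ∑_{n ∈ S} w(n) (so that π(n) := w(n)/C_x(N) is the steady-state distribution of the SOQN with lost customers and arrival rate x). Let j ∈ {1,…,J} be a node whose service rate is constant, ν_j(i) = ν_j for all i. Then the steady-state probability that node j is empty equals ∑_{n ∈ S, n_j = 0} π(n) = 1 − (η_j/ν_j) · C_x(N−1)/C_x(N) = 1 − λ_eff(x) · η_j/(η₀ · ν_j). In particular, if x is adjusted so that λ_eff(x) = λ_BO, this probability equals 1 − λ_BO · η_j/(η₀ · ν_j), the same as the idle probability of node j in the SOQN with backordering. -/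

import Mathlib

open Finset

noncomputable def Cstb (J : ℕ) (η : Fin J → ℝ) (ν : Fin J → ℕ → ℝ) (m : ℕ) : ℝ :=
  ∑ n ∈ Finset.Nat.antidiagonalTuple J m,
    ∏ j, ∏ i ∈ Finset.range (n j), η j / ν j (i + 1)

noncomputable def lamEff (J N : ℕ) (η0 : ℝ) (η : Fin J → ℝ) (ν : Fin J → ℕ → ℝ)
    (x : ℝ) : ℝ :=
  x * (1 - Cstb J η ν N /
    ∑ n0 ∈ Finset.range (N + 1), (η0 / x) ^ n0 * Cstb J η ν (N - n0))

noncomputable def Cx (J : ℕ) (η0 : ℝ) (η : Fin J → ℝ) (ν : Fin J → ℕ → ℝ)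
    (x : ℝ) (L : ℕ) : ℝ :=
  ∑ n0 ∈ Finset.range (L + 1), (η0 / x) ^ n0 * Cstb J η ν (L - n0)

lemma sum_AT_succ {k M : ℕ} (f : (Fin (k+1) → ℕ) → ℝ) :
    ∑ n ∈ Finset.Nat.antidiagonalTuple (k+1) M, f n
      = ∑ n0 ∈ Finset.range (M+1),
          ∑ m ∈ Finset.Nat.antidiagonalTuple k (M - n0), f (Fin.cons n0 m) := by
  rw [← Finset.sum_fiberwise_of_maps_to (g := fun n : Fin (k+1) → ℕ => n 0)
      (t := Finset.range (M+1)) ?_ f]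
  · refine Finset.sum_congr rfl fun n0 hn0 => ?_
    refine Finset.sum_nbij' (i := fun n => Fin.tail n) (j := fun m => Fin.cons n0 m)
      ?_ ?_ ?_ ?_ ?_
    · intro a ha
      simp only [Finset.mem_filter, Finset.Nat.mem_antidiagonalTuple] at ha
      rw [Finset.Nat.mem_antidiagonalTuple]
      have h1 : ∑ i, a i = a 0 + ∑ i : Fin k, a i.succ := Fin.sum_univ_succ a
      show ∑ i : Fin k, a i.succ = M - n0
      omega
    · intro m hm
      rw [Finset.Nat.mem_antidiagonalTuple] at hm
      have hn0' : n0 ≤ M := by simpa [Nat.lt_succ] using hn0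
      simp only [Finset.mem_filter, Finset.Nat.mem_antidiagonalTuple, Fin.cons_zero]
      refine ⟨?_, trivial⟩
      rw [Fin.sum_univ_succ]
      simp only [Fin.cons_zero, Fin.cons_succ]
      omega
    · intro a ha
      simp only [Finset.mem_filter] at ha
      rw [← ha.2]
      exact Fin.cons_self_tail a
    · intro m _; simp
    · intro a ha
      simp only [Finset.mem_filter] at ha
      rw [← ha.2, Fin.cons_self_tail a]
  · intro n hn
    rw [Finset.Nat.mem_antidiagonalTuple] at hn
    have h1 : ∑ i, n i = n 0 + ∑ i : Fin k, n i.succ := Fin.sum_univ_succ n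
    simp only [Finset.mem_range]
    omega

lemma Cstb_nonneg {J : ℕ} {η : Fin J → ℝ} {ν : Fin J → ℕ → ℝ}
    (hη : ∀ j, 0 < η j) (hν : ∀ j i, 1 ≤ i → 0 < ν j i) (m : ℕ) :
    0 ≤ Cstb J η ν m := by
  refine Finset.sum_nonneg fun n _ => Finset.prod_nonneg fun j _ =>
    Finset.prod_nonneg fun i _ => div_nonneg (hη j).le (hν j (i+1) (by omega)).le

lemma Cstb_zero {J : ℕ} (η : Fin J → ℝ) (ν : Fin J → ℕ → ℝ) :
    Cstb J η ν 0 = 1 := by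
  simp [Cstb, Finset.Nat.antidiagonalTuple_zero_right]

lemma Cx_pos {J : ℕ} {η0 : ℝ} {η : Fin J → ℝ} {ν : Fin J → ℕ → ℝ} {x : ℝ}
    (hη0 : 0 < η0) (hη : ∀ j, 0 < η j) (hν : ∀ j i, 1 ≤ i → 0 < ν j i)
    (hx : 0 < x) (L : ℕ) : 0 < Cx J η0 η ν x L := by
  refine Finset.sum_pos' (fun i _ => mul_nonneg (by positivity) (Cstb_nonneg hη hν _)) ?_
  refine ⟨L, Finset.self_mem_range_succ L, ?_⟩
  rw [Nat.sub_self, Cstb_zero, mul_one]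
  positivity

lemma Cx_succ {J : ℕ} (η0 : ℝ) (η : Fin J → ℝ) (ν : Fin J → ℕ → ℝ) (x : ℝ) (M : ℕ) :
    Cx J η0 η ν x (M+1) = Cstb J η ν (M+1) + (η0/x) * Cx J η0 η ν x M := by
  unfold Cx
  rw [Finset.sum_range_succ', Finset.mul_sum]
  simp only [pow_zero, one_mul, Nat.sub_zero, pow_succ, Nat.succ_sub_succ]
  ring_nf

theorem idle_probability_lost_customers
    (J N : ℕ) (hJ : 1 ≤ J) (hN : 1 ≤ N)
    (η0 : ℝ) (hη0 : 0 < η0)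
    (η : Fin J → ℝ) (hη : ∀ j, 0 < η j)
    (ν : Fin J → ℕ → ℝ) (hν : ∀ j i, 1 ≤ i → 0 < ν j i)
    (x : ℝ) (hx : 0 < x)
    (j : Fin J) (c : ℝ) (hc : 0 < c) (hconst : ∀ i, 1 ≤ i → ν j i = c)
    (w : (Fin (J + 1) → ℕ) → ℝ)
    (hw : ∀ n, w n = (η0 / x) ^ n 0 *
        ∏ k : Fin J, ∏ i ∈ Finset.range (n k.succ), η k / ν k (i + 1))
    (CS : ℝ) (hCS : CS = ∑ n ∈ Finset.Nat.antidiagonalTuple (J + 1) N, w n) :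
    (∑ n ∈ (Finset.Nat.antidiagonalTuple (J + 1) N).filter (fun n => n j.succ = 0),
        w n / CS)
      = 1 - (η j / c) * Cx J η0 η ν x (N - 1) / Cx J η0 η ν x N ∧
    (∑ n ∈ (Finset.Nat.antidiagonalTuple (J + 1) N).filter (fun n => n j.succ = 0),
        w n / CS)
      = 1 - lamEff J N η0 η ν x * η j / (η0 * c) ∧
    ∀ lamBO : ℝ, lamEff J N η0 η ν x = lamBO →
      (∑ n ∈ (Finset.Nat.antidiagonalTuple (J + 1) N).filter (fun n => n j.succ = 0),
          w n / CS)
        = 1 - lamBO * η j / (η0 * c) := by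
  have hkey0 : ∀ M : ℕ,
      ∑ n ∈ Finset.Nat.antidiagonalTuple (J+1) M, w n = Cx J η0 η ν x M := by
    intro M
    rw [sum_AT_succ]
    unfold Cx
    refine Finset.sum_congr rfl fun n0 _ => ?_
    rw [Cstb, Finset.mul_sum]
    refine Finset.sum_congr rfl fun m _ => ?_
    rw [hw]
    simp [Fin.cons_zero, Fin.cons_succ]
  have hwup : ∀ m : Fin (J+1) → ℕ,
      w (Function.update m j.succ (m j.succ + 1)) = (η j / c) * w m := by
    intro m
    rw [hw, hw]
    have h0 : Function.update m j.succ (m j.succ + 1) 0 = m 0 :=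
      Function.update_of_ne (Fin.succ_ne_zero j).symm _ _
    have hk : ∀ k : Fin J,
        (∏ i ∈ Finset.range (Function.update m j.succ (m j.succ + 1) k.succ),
          η k / ν k (i + 1))
        = (∏ i ∈ Finset.range
            (Function.update (fun k : Fin J => m k.succ) j (m j.succ + 1) k),
          η k / ν k (i + 1)) := by
      intro k
      by_cases hkj : k = j
      · subst hkj; simp
      · rw [Function.update_of_ne (fun h => hkj (Fin.succ_injective _ h)),
            Function.update_of_ne hkj]
    rw [h0, Finset.prod_congr rfl (fun k _ => hk k),
        Finset.prod_eq_mul_prod_sdiff_singleton_of_mem (Finset.mem_univ j),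
        Finset.prod_eq_mul_prod_sdiff_singleton_of_mem (Finset.mem_univ j)
          (fun k => ∏ i ∈ Finset.range (m k.succ), η k / ν k (i + 1))]
    have herase : ∀ k ∈ Finset.univ \ {j},
        (∏ i ∈ Finset.range
            (Function.update (fun k : Fin J => m k.succ) j (m j.succ + 1) k),
          η k / ν k (i + 1))
        = ∏ i ∈ Finset.range (m k.succ), η k / ν k (i + 1) := by
      intro k hk
      have : k ≠ j := by simpa using (Finset.mem_sdiff.mp hk).2
      rw [Function.update_of_ne this]
    rw [Finset.prod_congr rfl herase, Function.update_self, Finset.prod_range_succ,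
        hconst _ (by omega)]
    ring
  have hsum_up : ∀ (f : Fin (J+1) → ℕ) (a : Fin (J+1)) (v : ℕ),
      (∑ i, Function.update f a v i) + f a = (∑ i, f i) + v := by
    intro f a v
    rw [Finset.sum_update_of_mem (Finset.mem_univ a),
        Finset.sum_eq_sum_sdiff_singleton_add (Finset.mem_univ a) f]
    omega
  have hCxN : 0 < Cx J η0 η ν x N := Cx_pos hη0 hη hν hx N
  have hCxN1 : 0 < Cx J η0 η ν x (N-1) := Cx_pos hη0 hη hν hx (N-1)
  have hkey2 : ∑ n ∈ (Finset.Nat.antidiagonalTuple (J+1) N).filter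
        (fun n => ¬ n j.succ = 0), w n
      = (η j / c) * Cx J η0 η ν x (N-1) := by
    rw [← hkey0 (N-1), Finset.mul_sum]
    refine Finset.sum_nbij' (fun n => Function.update n j.succ (n j.succ - 1))
      (fun m => Function.update m j.succ (m j.succ + 1)) ?_ ?_ ?_ ?_ ?_
    · intro n hn
      simp only [Finset.mem_filter, Finset.Nat.mem_antidiagonalTuple] at hn
      rw [Finset.Nat.mem_antidiagonalTuple]
      show ∑ i, Function.update n j.succ (n j.succ - 1) i = N - 1
      have := hsum_up n j.succ (n j.succ - 1)
      omega
    · intro m hm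
      rw [Finset.Nat.mem_antidiagonalTuple] at hm
      simp only [Finset.mem_filter, Finset.Nat.mem_antidiagonalTuple]
      have := hsum_up m j.succ (m j.succ + 1)
      have h2 : Function.update m j.succ (m j.succ + 1) j.succ = m j.succ + 1 :=
        Function.update_self _ _ _
      exact ⟨by omega, by omega⟩
    · intro n hn
      simp only [Finset.mem_filter, Finset.Nat.mem_antidiagonalTuple] at hn
      show Function.update (Function.update n j.succ (n j.succ - 1)) j.succ
          ((Function.update n j.succ (n j.succ - 1)) j.succ + 1) = n
      rw [Function.update_self, Function.update_idem]
      have h2 : n j.succ - 1 + 1 = n j.succ := by omega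
      rw [h2, Function.update_eq_self]
    · intro m hm
      show Function.update (Function.update m j.succ (m j.succ + 1)) j.succ
          ((Function.update m j.succ (m j.succ + 1)) j.succ - 1) = m
      rw [Function.update_self, Function.update_idem, Nat.add_sub_cancel,
        Function.update_eq_self]
    · intro n hn
      simp only [Finset.mem_filter, Finset.Nat.mem_antidiagonalTuple] at hn
      show w n = η j / c * w (Function.update n j.succ (n j.succ - 1))
      have h3 : Function.update (Function.update n j.succ (n j.succ - 1)) j.succ
          ((Function.update n j.succ (n j.succ - 1)) j.succ + 1) = n := by
        rw [Function.update_self, Function.update_idem]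
        have h2 : n j.succ - 1 + 1 = n j.succ := by omega
        rw [h2, Function.update_eq_self]
      conv_lhs => rw [← h3]
      exact hwup _
  have hCSeq : CS = Cx J η0 η ν x N := by rw [hCS, hkey0 N]
  have hsplit := Finset.sum_filter_add_sum_filter_not
    (Finset.Nat.antidiagonalTuple (J+1) N) (fun n => n j.succ = 0) w
  have hA : ∑ n ∈ (Finset.Nat.antidiagonalTuple (J + 1) N).filter
        (fun n => n j.succ = 0), w n
      = Cx J η0 η ν x N - (η j / c) * Cx J η0 η ν x (N-1) := by
    rw [hkey2] at hsplit
    rw [hkey0 N] at hsplit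
    linarith
  have goal1 : (∑ n ∈ (Finset.Nat.antidiagonalTuple (J + 1) N).filter
        (fun n => n j.succ = 0), w n / CS)
      = 1 - (η j / c) * Cx J η0 η ν x (N - 1) / Cx J η0 η ν x N := by
    rw [← Finset.sum_div, hA, hCSeq]
    field_simp
  have hN1 : N - 1 + 1 = N := by omega
  have hrec := Cx_succ (J := J) η0 η ν x (N-1)
  rw [hN1] at hrec
  have hlam : lamEff J N η0 η ν x
      = x * (1 - Cstb J η ν N / Cx J η0 η ν x N) := rfl
  have hlam2 : lamEff J N η0 η ν x = η0 * Cx J η0 η ν x (N-1) / Cx J η0 η ν x N := by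
    have hCstb : Cstb J η ν N = Cx J η0 η ν x N - (η0/x) * Cx J η0 η ν x (N-1) := by
      linarith
    rw [hlam, hCstb]
    field_simp
    ring
  have goal2 : (∑ n ∈ (Finset.Nat.antidiagonalTuple (J + 1) N).filter
        (fun n => n j.succ = 0), w n / CS)
      = 1 - lamEff J N η0 η ν x * η j / (η0 * c) := by
    rw [goal1, hlam2]
    field_simp
  exact ⟨goal1, goal2, fun lamBO hBO => by rw [goal2, ← hBO]⟩
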